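/- The density δ(a,b,c) of the Rogers simplex R(a,b,c) is monotonically decreasing in each of the variables a, b, c for 1 < a < b < c. -/

import Mathlib

noncomputable section
open MeasureTheory

def pt3 (x y z : ℝ) : EuclideanSpace ℝ (Fin 3) := WithLp.toLp 2 ![x, y, z]

/-- The Rogers simplex R(a,b,c): the convex hull of 0, (a,0,0),
(a,√(b²−a²),0), and (a,√(b²−a²),√(c²−b²)). -/
def RogersSimplex (a b c : ℝ) : Set (EuclideanSpace ℝ (Fin 3)) :=
  convexHull ℝ {0, pt3 a 0 0, pt3 a (Real.sqrt (b^2 - a^2)) 0,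
    pt3 a (Real.sqrt (b^2 - a^2)) (Real.sqrt (c^2 - b^2))}

/-- The density of the Rogers simplex: the ratio of the volume of its
intersection with the unit ball at the origin to its volume. -/
def rogersDensity (a b c : ℝ) : ℝ :=
  (volume (RogersSimplex a b c ∩ Metric.closedBall (0 : EuclideanSpace ℝ (Fin 3)) 1)).toReal /
    (volume (RogersSimplex a b c)).toReal

namespace RA

def eqv : EuclideanSpace ℝ (Fin 3) ≃ₗ[ℝ] (Fin 3 → ℝ) := WithLp.linearEquiv 2 ℝ (Fin 3 → ℝ)

def M (a b c : ℝ) : Matrix (Fin 3) (Fin 3) ℝ :=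
  !![a, a, a; 0, Real.sqrt (b^2-a^2), Real.sqrt (b^2-a^2); 0, 0, Real.sqrt (c^2-b^2)]

/-- The linear map sending the standard simplex onto the Rogers simplex. -/
def L (a b c : ℝ) : EuclideanSpace ℝ (Fin 3) →ₗ[ℝ] EuclideanSpace ℝ (Fin 3) :=
  (eqv.symm : (Fin 3 → ℝ) →ₗ[ℝ] _) ∘ₗ (Matrix.toLin' (M a b c)) ∘ₗ (eqv : _ →ₗ[ℝ] _)

lemma L_det (a b c : ℝ) :
    LinearMap.det (L a b c) = a * Real.sqrt (b^2-a^2) * Real.sqrt (c^2-b^2) := by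
  have : L a b c = (eqv.symm : (Fin 3 → ℝ) →ₗ[ℝ] _) ∘ₗ (Matrix.toLin' (M a b c)) ∘ₗ
      ((eqv.symm).symm : _ →ₗ[ℝ] _) := rfl
  rw [this, LinearMap.det_conj, LinearMap.det_toLin', M, Matrix.det_fin_three]
  simp [Matrix.cons_val_zero, Matrix.cons_val_one]

lemma L_apply (a b c : ℝ) (t : EuclideanSpace ℝ (Fin 3)) :
    L a b c t = pt3 (a * (t 0 + t 1 + t 2)) (Real.sqrt (b^2-a^2) * (t 1 + t 2))
      (Real.sqrt (c^2-b^2) * t 2) := by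
  ext i
  fin_cases i <;>
    simp [L, eqv, M, pt3, Matrix.toLin'_apply, Matrix.mulVec, dotProduct,
      Fin.sum_univ_three] <;> ring

/-- The standard simplex. -/
def S : Set (EuclideanSpace ℝ (Fin 3)) := convexHull ℝ {0, pt3 1 0 0, pt3 0 1 0, pt3 0 0 1}

lemma image_S (a b c : ℝ) : L a b c '' S = RogersSimplex a b c := by
  rw [S, LinearMap.image_convexHull]
  have h0 : L a b c (0 : EuclideanSpace ℝ (Fin 3)) = 0 := map_zero _
  have h1 : L a b c (pt3 1 0 0) = pt3 a 0 0 := by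
    rw [L_apply]; simp [pt3]
  have h2 : L a b c (pt3 0 1 0) = pt3 a (Real.sqrt (b^2-a^2)) 0 := by
    rw [L_apply]; simp [pt3]
  have h3 : L a b c (pt3 0 0 1) = pt3 a (Real.sqrt (b^2-a^2)) (Real.sqrt (c^2-b^2)) := by
    rw [L_apply]; simp [pt3]
  rw [RogersSimplex]
  congr 1
  rw [Set.image_insert_eq, Set.image_insert_eq, Set.image_insert_eq, Set.image_singleton,
    h0, h1, h2, h3]

lemma S_nonneg {t : EuclideanSpace ℝ (Fin 3)} (ht : t ∈ S) (i : Fin 3) : 0 ≤ t i := by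
  have hconv : Convex ℝ {t : EuclideanSpace ℝ (Fin 3) | ∀ i, 0 ≤ t i} := by
    intro x hx y hy p q hp hq hpq i
    have : (p • x + q • y) i = p * x i + q * y i := rfl
    rw [this]
    have := hx i; have := hy i
    positivity
  have hsub : S ⊆ {t : EuclideanSpace ℝ (Fin 3) | ∀ i, 0 ≤ t i} := by
    apply convexHull_min _ hconv
    intro x hx
    rcases hx with h | h | h | h <;> subst h <;> intro i <;> fin_cases i <;>
      norm_num [pt3]
  exact hsub ht i

lemma cube_subset_S : {t : EuclideanSpace ℝ (Fin 3) | ∀ i, t i ∈ Set.Icc (0:ℝ) (1/4)} ⊆ S := by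
  intro t ht
  have h0 := ht 0; have h1 := ht 1; have h2 := ht 2
  have key : ∑ j : Fin 4, (![1 - t 0 - t 1 - t 2, t 0, t 1, t 2] j) •
      (![0, pt3 1 0 0, pt3 0 1 0, pt3 0 0 1] j : EuclideanSpace ℝ (Fin 3)) = t := by
    rw [Fin.sum_univ_four]
    ext i
    fin_cases i <;> simp [pt3]
  rw [← key]
  apply Convex.sum_mem (convex_convexHull ℝ _)
  · intro j _
    fin_cases j <;> simp <;> linarith [h0.1, h0.2, h1.1, h1.2, h2.1, h2.2]
  · rw [Fin.sum_univ_four]; simp; ring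
  · intro j _
    apply subset_convexHull
    fin_cases j <;> simp [S]
  
lemma vol_S_pos : 0 < volume S := by
  refine lt_of_lt_of_le ?_ (measure_mono cube_subset_S)
  have hmp := EuclideanSpace.volume_preserving_symm_measurableEquiv_toLp (Fin 3)
  have : {t : EuclideanSpace ℝ (Fin 3) | ∀ i, t i ∈ Set.Icc (0:ℝ) (1/4)} =
      (MeasurableEquiv.toLp 2 (Fin 3 → ℝ)).symm ⁻¹'
        (Set.univ.pi fun _ : Fin 3 => Set.Icc (0:ℝ) (1/4)) := by
    ext t
    simp only [Set.mem_setOf_eq, Set.mem_preimage, Set.mem_pi, Set.mem_univ, true_implies]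
    exact Iff.rfl
  rw [this, MeasurePreserving.measure_preimage hmp
    (MeasurableSet.univ_pi fun _ => measurableSet_Icc).nullMeasurableSet]
  rw [volume_pi_pi]
  simp only [Real.volume_Icc, Finset.prod_const, Finset.card_univ, Fintype.card_fin]
  exact ENNReal.pow_pos (by rw [show (1:ℝ)/4 - 0 = 1/4 by ring]; exact ENNReal.ofReal_pos.2 (by norm_num)) 3

lemma vol_S_finite : volume S < ⊤ := by
  have : IsCompact S := (Set.toFinite _).isCompact_convexHull ℝ
  exact this.measure_lt_top

set_option maxHeartbeats 2000000 in
/-- The key distance estimate. -/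
lemma norm_L_le (a1 b1 c1 a2 b2 c2 : ℝ)
    (h1a : 0 < a2) (h2b : a2 < b2) (h2c : b2 < c2)
    (h1b : a1 < b1) (h1c : b1 < c1)
    (ha : a2 ≤ a1) (hb : b2 ≤ b1) (hc : c2 ≤ c1)
    (t : EuclideanSpace ℝ (Fin 3)) (ht : ∀ i, 0 ≤ t i) :
    ‖L a2 b2 c2 t‖ ≤ ‖L a1 b1 c1 t‖ := by
  have h0 := ht 0; have h1 := ht 1; have h2 := ht 2
  rw [L_apply, L_apply, EuclideanSpace.norm_eq, EuclideanSpace.norm_eq]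
  apply Real.sqrt_le_sqrt
  have e1 : Real.sqrt (b1^2 - a1^2) ^ 2 = b1^2 - a1^2 :=
    Real.sq_sqrt (by nlinarith)
  have e2 : Real.sqrt (c1^2 - b1^2) ^ 2 = c1^2 - b1^2 :=
    Real.sq_sqrt (by nlinarith)
  have e3 : Real.sqrt (b2^2 - a2^2) ^ 2 = b2^2 - a2^2 :=
    Real.sq_sqrt (by nlinarith)
  have e4 : Real.sqrt (c2^2 - b2^2) ^ 2 = c2^2 - b2^2 :=
    Real.sq_sqrt (by nlinarith)
  simp only [pt3, WithLp.ofLp_toLp, Fin.sum_univ_three, Real.norm_eq_abs, sq_abs]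
  simp only [Matrix.cons_val_zero, Matrix.cons_val_one, Matrix.head_cons,
    Matrix.cons_val_two, Matrix.tail_cons]
  have expand1 : (a1 * (t 0 + t 1 + t 2))^2 + (Real.sqrt (b1^2-a1^2) * (t 1 + t 2))^2 +
      (Real.sqrt (c1^2-b1^2) * t 2)^2 =
      a1^2 * (t 0 + t 1 + t 2)^2 + (b1^2-a1^2) * (t 1 + t 2)^2 + (c1^2-b1^2) * t 2^2 := by
    rw [mul_pow, mul_pow, mul_pow, e1, e2]
  have expand2 : (a2 * (t 0 + t 1 + t 2))^2 + (Real.sqrt (b2^2-a2^2) * (t 1 + t 2))^2 +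
      (Real.sqrt (c2^2-b2^2) * t 2)^2 =
      a2^2 * (t 0 + t 1 + t 2)^2 + (b2^2-a2^2) * (t 1 + t 2)^2 + (c2^2-b2^2) * t 2^2 := by
    rw [mul_pow, mul_pow, mul_pow, e3, e4]
  rw [expand1, expand2]
  have ha2 : 0 ≤ (a1^2 - a2^2) * ((t 0 + t 1 + t 2)^2 - (t 1 + t 2)^2) :=
    mul_nonneg (by nlinarith) (by nlinarith)
  have hb2 : 0 ≤ (b1^2 - b2^2) * ((t 1 + t 2)^2 - t 2^2) :=
    mul_nonneg (by nlinarith) (by nlinarith)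
  have hc2 : 0 ≤ (c1^2 - c2^2) * t 2^2 :=
    mul_nonneg (by nlinarith) (sq_nonneg _)
  nlinarith [ha2, hb2, hc2]

end RA

/-- The density δ(a,b,c) of the Rogers simplex is monotonically decreasing in
each variable for 1 < a < b < c. -/
theorem rogersDensity_antitone
    (a1 b1 c1 a2 b2 c2 : ℝ)
    (h1a : 1 < a1) (h1b : a1 < b1) (h1c : b1 < c1)
    (h2a : 1 < a2) (h2b : a2 < b2) (h2c : b2 < c2)
    (ha : a2 ≤ a1) (hb : b2 ≤ b1) (hc : c2 ≤ c1) :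
    rogersDensity a1 b1 c1 ≤ rogersDensity a2 b2 c2 := by
  classical
  set B := Metric.closedBall (0 : EuclideanSpace ℝ (Fin 3)) 1 with hB
  set A : Set (EuclideanSpace ℝ (Fin 3)) := RA.S ∩ (RA.L a1 b1 c1) ⁻¹' B with hA
  -- determinants
  set d1 : ℝ := a1 * Real.sqrt (b1^2-a1^2) * Real.sqrt (c1^2-b1^2) with hd1
  set d2 : ℝ := a2 * Real.sqrt (b2^2-a2^2) * Real.sqrt (c2^2-b2^2) with hd2
  have hd1pos : 0 < d1 := by
    apply mul_pos (mul_pos (by linarith) _) _ <;>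
      exact Real.sqrt_pos.2 (by nlinarith)
  have hd2pos : 0 < d2 := by
    apply mul_pos (mul_pos (by linarith) _) _ <;>
      exact Real.sqrt_pos.2 (by nlinarith)
  -- volume identities
  have himg1 : RogersSimplex a1 b1 c1 ∩ B = RA.L a1 b1 c1 '' A := by
    rw [hA, Set.image_inter_preimage, RA.image_S]
  have himg2 : RA.L a2 b2 c2 '' A ⊆ RogersSimplex a2 b2 c2 ∩ B := by
    rintro x ⟨t, ⟨htS, htB⟩, rfl⟩
    constructor
    · rw [← RA.image_S a2 b2 c2]; exact Set.mem_image_of_mem _ htS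
    · rw [hB, Metric.mem_closedBall, dist_zero_right]
      have hle : ‖RA.L a2 b2 c2 t‖ ≤ ‖RA.L a1 b1 c1 t‖ :=
        RA.norm_L_le a1 b1 c1 a2 b2 c2 (by linarith) h2b h2c h1b h1c ha hb hc t
          (fun i => RA.S_nonneg htS i)
      have : ‖RA.L a1 b1 c1 t‖ ≤ 1 := by
        simpa [hB, Metric.mem_closedBall, dist_zero_right] using htB
      linarith
  have hvol1 : volume (RogersSimplex a1 b1 c1 ∩ B) = ENNReal.ofReal d1 * volume A := by
    rw [himg1, Measure.addHaar_image_linearMap, RA.L_det, abs_of_pos hd1pos, hd1]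
  have hvol2 : ENNReal.ofReal d2 * volume A ≤ volume (RogersSimplex a2 b2 c2 ∩ B) := by
    rw [← abs_of_pos hd2pos, hd2, ← RA.L_det, ← Measure.addHaar_image_linearMap]
    exact measure_mono himg2
  have hR1 : volume (RogersSimplex a1 b1 c1) = ENNReal.ofReal d1 * volume RA.S := by
    rw [← RA.image_S, Measure.addHaar_image_linearMap, RA.L_det, abs_of_pos hd1pos, hd1]
  have hR2 : volume (RogersSimplex a2 b2 c2) = ENNReal.ofReal d2 * volume RA.S := by
    rw [← RA.image_S, Measure.addHaar_image_linearMap, RA.L_det, abs_of_pos hd2pos, hd2]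
  -- real-number quantities
  have hSfin := RA.vol_S_finite
  have hSpos := RA.vol_S_pos
  set σ : ℝ := (volume RA.S).toReal with hσ
  have hσpos : 0 < σ := ENNReal.toReal_pos hSpos.ne' hSfin.ne
  have hAfin : volume A < ⊤ :=
    lt_of_le_of_lt (measure_mono Set.inter_subset_left) hSfin
  set α : ℝ := (volume A).toReal with hα
  have hαnn : 0 ≤ α := ENNReal.toReal_nonneg
  -- rewrite densities
  have hcap2fin : volume (RogersSimplex a2 b2 c2 ∩ B) < ⊤ := by
    refine lt_of_le_of_lt (measure_mono Set.inter_subset_left) ?_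
    rw [hR2]
    exact ENNReal.mul_lt_top ENNReal.ofReal_lt_top hSfin
  have hd1' : rogersDensity a1 b1 c1 = α / σ := by
    rw [rogersDensity, hvol1, hR1, ENNReal.toReal_mul, ENNReal.toReal_mul,
      ENNReal.toReal_ofReal hd1pos.le, ← hσ, ← hα,
      mul_div_mul_left _ _ hd1pos.ne']
  have hd2' : α / σ ≤ rogersDensity a2 b2 c2 := by
    rw [rogersDensity]
    have hnum : d2 * α ≤ (volume (RogersSimplex a2 b2 c2 ∩ B)).toReal := by
      have h := (ENNReal.toReal_le_toReal
        ((ENNReal.mul_lt_top ENNReal.ofReal_lt_top hAfin).ne) hcap2fin.ne).2 hvol2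
      rwa [ENNReal.toReal_mul, ENNReal.toReal_ofReal hd2pos.le] at h
    have hden : (volume (RogersSimplex a2 b2 c2)).toReal = d2 * σ := by
      rw [hR2, ENNReal.toReal_mul, ENNReal.toReal_ofReal hd2pos.le]
    rw [hden]
    calc α / σ = d2 * α / (d2 * σ) := (mul_div_mul_left _ _ hd2pos.ne').symm
      _ ≤ _ := div_le_div_of_nonneg_right hnum (by positivity)
  linarith [hd1', hd2']
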